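/- The map δ sending a permutation π ∈ S_n to the arc diagram whose arcs correspond to descents of π (for each descent π_i > π_{i+1}, an arc connecting π_i to π_{i+1} passing right of each value π_j with π_{i+1} < π_j < π_i and j < i, and left of each such value with j > i) is a bijection from S_n to the set of noncrossing arc diagrams on n points. -/

import Mathlib

/-- A (combinatorial, type-A) arc on the points of `Fin n`: endpoints `p < q`
together with the set `R` of interior points passed on the right. -/
structure Arc (n : ℕ) where
  p : Fin n
  q : Fin n
  R : Finset (Fin n)
  hpq : p < q
  hR : ∀ i ∈ R, p < i ∧ i < q

namespace Arc

variable {n : ℕ}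

/-- The side of the arc `α` at a point `i` of its closed interval:
`0` at endpoints, `1` if `i` is right of `α`, `-1` if left. -/
def sgn (α : Arc n) (i : Fin n) : ℤ :=
  if i = α.p ∨ i = α.q then 0 else if i ∈ α.R then 1 else -1

/-- Two arcs cross if their relative horizontal order flips somewhere on the
intersection of their closed intervals of points. -/
def Crosses (α β : Arc n) : Prop :=
  ∃ i j : Fin n, max α.p β.p ≤ i ∧ i < j ∧ j ≤ min α.q β.q ∧
    (sgn α i - sgn β i) * (sgn α j - sgn β j) < 0

/-- Two arcs are compatible if they do not share an upper endpoint, do not share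
a lower endpoint, and do not cross. -/
def Compatible (α β : Arc n) : Prop :=
  α.p ≠ β.p ∧ α.q ≠ β.q ∧ ¬ Crosses α β

end Arc

/-- A noncrossing arc diagram: a set of pairwise compatible arcs. -/
def IsNCAD {n : ℕ} (D : Set (Arc n)) : Prop :=
  ∀ α ∈ D, ∀ β ∈ D, α ≠ β → Arc.Compatible α β

/-- The arc diagram `δ(π)` of a permutation `π`: one arc per descent, with
lower endpoint `π (i+1)`, upper endpoint `π i`, passing right of exactly the
intermediate values occurring after position `i`. -/
def diagram {n : ℕ} (π : Equiv.Perm (Fin n)) : Set (Arc n) :=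
  {α | ∃ (i : Fin n) (h : (i : ℕ) + 1 < n),
     π ⟨(i : ℕ) + 1, h⟩ < π i ∧ α.p = π ⟨(i : ℕ) + 1, h⟩ ∧ α.q = π i ∧
     ∀ x : Fin n, x ∈ α.R ↔ ∃ j : Fin n, i < j ∧ π j = x ∧ α.p < x ∧ x < α.q}

open Equiv Finset

namespace NCAD
variable {n m : ℕ}

theorem arcExt {α β : Arc n} (hp : α.p = β.p) (hq : α.q = β.q) (hR : α.R = β.R) : α = β := by
  cases α; cases β; simp_all

theorem sgn_p (α : Arc n) : α.sgn α.p = 0 := by simp [Arc.sgn]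
theorem sgn_q (α : Arc n) : α.sgn α.q = 0 := by simp [Arc.sgn]
theorem sgn_one {α : Arc n} {x : Fin n} (h1 : x ≠ α.p) (h2 : x ≠ α.q) (h3 : x ∈ α.R) :
    α.sgn x = 1 := by simp [Arc.sgn, h1, h2, h3]
theorem sgn_neg {α : Arc n} {x : Fin n} (h1 : x ≠ α.p) (h2 : x ≠ α.q) (h3 : x ∉ α.R) :
    α.sgn x = -1 := by simp [Arc.sgn, h1, h2, h3]
theorem sgn_mem_Icc (α : Arc n) (x : Fin n) : α.sgn x = 0 ∨ α.sgn x = 1 ∨ α.sgn x = -1 := by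
  unfold Arc.sgn; split <;> [left; (right; split <;> [left; right])] <;> rfl

/-- The arc attached to a descent of `π`. -/
def descArc (π : Perm (Fin n)) (i : Fin n) (h : (i : ℕ) + 1 < n)
    (hd : π ⟨(i : ℕ) + 1, h⟩ < π i) : Arc n where
  p := π ⟨(i : ℕ) + 1, h⟩
  q := π i
  R := ((Finset.Ioi i).image π) ∩ Finset.Ioo (π ⟨(i : ℕ) + 1, h⟩) (π i)
  hpq := hd
  hR := by intro x hx; simp only [Finset.mem_inter, Finset.mem_Ioo] at hx; exact hx.2

theorem mem_descArc_R {π : Perm (Fin n)} {i : Fin n} {h : (i : ℕ) + 1 < n}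
    {hd : π ⟨(i : ℕ) + 1, h⟩ < π i} {x : Fin n} :
    x ∈ (descArc π i h hd).R ↔ (∃ j : Fin n, i < j ∧ π j = x) ∧
      π ⟨(i : ℕ) + 1, h⟩ < x ∧ x < π i := by
  simp [descArc, Finset.mem_Ioo, Finset.mem_Ioi, eq_comm]

theorem descArc_mem (π : Perm (Fin n)) (i : Fin n) (h : (i : ℕ) + 1 < n)
    (hd : π ⟨(i : ℕ) + 1, h⟩ < π i) : descArc π i h hd ∈ diagram π := by
  refine ⟨i, h, hd, rfl, rfl, fun x => ?_⟩
  rw [mem_descArc_R]; constructor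
  · rintro ⟨⟨j, hj, rfl⟩, h1, h2⟩; exact ⟨j, hj, rfl, h1, h2⟩
  · rintro ⟨j, hj, rfl, h1, h2⟩; exact ⟨⟨j, hj, rfl⟩, h1, h2⟩

theorem mem_diagram_iff {π : Perm (Fin n)} {α : Arc n} :
    α ∈ diagram π ↔ ∃ (i : Fin n) (h : (i : ℕ) + 1 < n) (hd : π ⟨(i : ℕ) + 1, h⟩ < π i),
      α = descArc π i h hd := by
  constructor
  · rintro ⟨i, h, hd, hp, hq, hiff⟩
    refine ⟨i, h, hd, arcExt hp hq ?_⟩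
    ext x
    rw [hiff x, mem_descArc_R, hp]
    constructor
    · rintro ⟨j, hj, rfl, h1, h2⟩; exact ⟨⟨j, hj, rfl⟩, h1, hq ▸ h2⟩
    · rintro ⟨⟨j, hj, rfl⟩, h1, h2⟩; exact ⟨j, hj, rfl, h1, hq ▸ h2⟩
  · rintro ⟨i, h, hd, rfl⟩; exact descArc_mem π i h hd

/-- Monotonicity of sides: for descents `i < k`, the arc at `k` is weakly left of
the arc at `i` throughout the overlap of their intervals. -/
theorem sgn_le {π : Perm (Fin n)} {i k : Fin n} {hi : (i : ℕ) + 1 < n} {hk : (k : ℕ) + 1 < n}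
    {hdi : π ⟨(i : ℕ) + 1, hi⟩ < π i} {hdk : π ⟨(k : ℕ) + 1, hk⟩ < π k}
    (hik : i < k) {x : Fin n}
    (hx1 : max (descArc π i hi hdi).p (descArc π k hk hdk).p ≤ x)
    (hx2 : x ≤ min (descArc π i hi hdi).q (descArc π k hk hdk).q) :
    (descArc π k hk hdk).sgn x ≤ (descArc π i hi hdi).sgn x := by
  set α := descArc π i hi hdi with hα
  set β := descArc π k hk hdk with hβ
  have hap : α.p = π ⟨(i : ℕ) + 1, hi⟩ := rfl
  have haq : α.q = π i := rfl
  have hbp : β.p = π ⟨(k : ℕ) + 1, hk⟩ := rfl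
  have hbq : β.q = π k := rfl
  by_cases hxa : x = α.p ∨ x = α.q
  · have h0 : α.sgn x = 0 := by unfold Arc.sgn; simp [hxa]
    rw [h0]
    by_cases hxb : x = β.p ∨ x = β.q
    · unfold Arc.sgn; simp [hxb]
    · have hnot : x ∉ β.R := by
        intro hmem
        rw [hβ, mem_descArc_R] at hmem
        obtain ⟨⟨j, hkj, hπj⟩, _, _⟩ := hmem
        rcases hxa with hx | hx
        · have : j = ⟨(i : ℕ) + 1, hi⟩ := π.injective (by rw [hπj, hx, hap])
          subst this
          have : ((i : ℕ) + 1) ≤ (k : ℕ) := hik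
          exact absurd hkj (by rw [Fin.lt_iff_val_lt_val]; show ¬ (k:ℕ) < (i:ℕ)+1; omega)
        · have : j = i := π.injective (by rw [hπj, hx, haq])
          subst this
          exact absurd hkj (not_lt.2 hik.le)
      push_neg at hxb
      rw [sgn_neg hxb.1 hxb.2 hnot]; norm_num
  · push_neg at hxa
    have hpx : α.p < x := lt_of_le_of_ne (le_trans (le_max_left _ _) hx1) (Ne.symm hxa.1)
    have hxq : x < α.q := lt_of_le_of_ne (le_trans hx2 (min_le_left _ _)) hxa.2
    by_cases hxb : x = β.p ∨ x = β.q
    · have h0 : β.sgn x = 0 := by unfold Arc.sgn; simp [hxb]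
      rw [h0]
      have hmem : x ∈ α.R := by
        rw [hα, mem_descArc_R]
        refine ⟨?_, hpx, hxq⟩
        rcases hxb with hx | hx
        · exact ⟨⟨(k : ℕ) + 1, hk⟩, by simp [Fin.lt_def]; omega, (hx.trans hbp).symm⟩
        · exact ⟨k, hik, (hx.trans hbq).symm⟩
      rw [sgn_one hxa.1 hxa.2 hmem]; norm_num
    · push_neg at hxb
      by_cases hmem : x ∈ β.R
      · obtain ⟨⟨j, hkj, hπj⟩, _, _⟩ := (mem_descArc_R).1 hmem
        have hmem' : x ∈ α.R := by
          rw [hα, mem_descArc_R]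
          exact ⟨⟨j, hik.trans hkj, hπj⟩, hpx, hxq⟩
        rw [sgn_one hxa.1 hxa.2 hmem', sgn_one hxb.1 hxb.2 hmem]
      · rw [sgn_neg hxb.1 hxb.2 hmem]
        rcases sgn_mem_Icc α x with h | h | h <;> rw [h] <;> norm_num

theorem isNCAD_diagram (π : Perm (Fin n)) : IsNCAD (diagram π) := by
  intro α hα β hβ hne
  obtain ⟨i, hi, hdi, rfl⟩ := mem_diagram_iff.1 hα
  obtain ⟨k, hk, hdk, rfl⟩ := mem_diagram_iff.1 hβ
  have hik : i ≠ k := by rintro rfl; exact hne rfl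
  have key : ∀ (i k : Fin n) (hi : (i:ℕ)+1 < n) (hk : (k:ℕ)+1 < n)
      (hdi : π ⟨(i:ℕ)+1, hi⟩ < π i) (hdk : π ⟨(k:ℕ)+1, hk⟩ < π k), i < k →
      Arc.Compatible (descArc π i hi hdi) (descArc π k hk hdk) ∧
      Arc.Compatible (descArc π k hk hdk) (descArc π i hi hdi) := by
    clear hik hne hα hβ hi hk hdi hdk i k
    intro i k hi hk hdi hdk hik
    have hp : (descArc π i hi hdi).p ≠ (descArc π k hk hdk).p := by
      intro h
      have : (⟨(i:ℕ)+1, hi⟩ : Fin n) = ⟨(k:ℕ)+1, hk⟩ := π.injective h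
      have := Fin.mk.injEq .. ▸ this
      simp [Fin.mk.injEq] at this
      omega
    have hq : (descArc π i hi hdi).q ≠ (descArc π k hk hdk).q := by
      intro h; exact absurd (π.injective h) hik.ne
    constructor
    · refine ⟨hp, hq, ?_⟩
      rintro ⟨u, v, h1, h2, h3, h4⟩
      have f1 := sgn_le hik h1 (h2.le.trans h3)
      have f2 := sgn_le hik (h1.trans h2.le) h3
      nlinarith
    · refine ⟨Ne.symm hp, Ne.symm hq, ?_⟩
      rintro ⟨u, v, h1, h2, h3, h4⟩
      rw [max_comm] at h1
      rw [min_comm] at h3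
      have f1 := sgn_le hik h1 (h2.le.trans h3)
      have f2 := sgn_le hik (h1.trans h2.le) h3
      nlinarith
  rcases lt_or_gt_of_ne hik with h | h
  · exact (key i k hi hk hdi hdk h).1
  · exact (key k i hk hi hdk hdi h).2

/-- A candidate point: never a lower endpoint and never passed on the right. -/
def IsCand (D : Set (Arc n)) (x : Fin n) : Prop := ∀ α ∈ D, x ≠ α.p ∧ x ∉ α.R

theorem isCand_first (π : Perm (Fin (m + 1))) : IsCand (diagram π) (π 0) := by
  intro α hα
  obtain ⟨i, h, hd, rfl⟩ := mem_diagram_iff.1 hα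
  constructor
  · intro hp
    have : (0 : Fin (m+1)) = ⟨(i : ℕ) + 1, h⟩ := π.injective hp
    have := congrArg Fin.val this; simp at this
  · intro hmem
    obtain ⟨⟨j, hij, hπj⟩, _, _⟩ := mem_descArc_R.1 hmem
    have : j = 0 := π.injective hπj
    subst this
    exact absurd hij (by simp)

theorem first_le_cand (π : Perm (Fin (m + 1))) {y : Fin (m + 1)}
    (hy : IsCand (diagram π) y) : π 0 ≤ y := by
  by_contra hlt
  push_neg at hlt
  set m₀ := π.symm y with hm₀
  have hπm₀ : π m₀ = y := π.apply_symm_apply y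
  have hm₀0 : m₀ ≠ 0 := by
    intro h; rw [h] at hπm₀; exact absurd hπm₀ (by intro h; rw [h] at hlt; exact lt_irrefl _ hlt)
  -- minimal position t ≤ m₀ with π t ≤ y
  set T : Finset (Fin (m+1)) := Finset.filter (fun t => t ≤ m₀ ∧ π t ≤ y) Finset.univ with hT
  have hTne : T.Nonempty := ⟨m₀, by simp [hT, hπm₀]⟩
  set j := T.min' hTne with hj
  have hjT : j ∈ T := T.min'_mem hTne
  have hjm₀ : j ≤ m₀ := (Finset.mem_filter.1 hjT).2.1
  have hπj : π j ≤ y := (Finset.mem_filter.1 hjT).2.2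
  have hj0 : j ≠ 0 := by
    intro h
    rw [h] at hπj
    exact absurd (lt_of_le_of_lt hπj hlt) (lt_irrefl _)
  have hjval : (j : ℕ) ≠ 0 := fun h => hj0 (Fin.ext (by simp [h]))
  set j' : Fin (m+1) := ⟨(j : ℕ) - 1, by omega⟩ with hj'
  have hj'j : j' < j := by rw [Fin.lt_iff_val_lt_val]; show (j:ℕ) - 1 < j; omega
  have hj'T : j' ∉ T := fun h => absurd (T.min'_le j' h) (not_le.2 hj'j)
  have hπj' : y < π j' := by
    by_contra hc
    push_neg at hc
    exact hj'T (by simp [hT]; exact ⟨hj'j.le.trans hjm₀, hc⟩)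
  have hsucc : (⟨(j' : ℕ) + 1, by simp [hj']; omega⟩ : Fin (m+1)) = j := by
    simp [hj', Fin.ext_iff]; omega
  have hh : (j' : ℕ) + 1 < m + 1 := by simp [hj']; omega
  have hd : π ⟨(j' : ℕ) + 1, hh⟩ < π j' := by
    rw [hsucc]; exact lt_of_le_of_lt hπj hπj'
  have hmem := descArc_mem π j' hh hd
  rcases lt_or_eq_of_le hπj with hlt2 | heq
  · -- y is in the R of this arc
    have hy2 := (hy _ hmem).2
    apply hy2
    rw [mem_descArc_R]
    have hjm : j' < m₀ := lt_of_lt_of_le hj'j hjm₀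
    exact ⟨⟨m₀, hjm, hπm₀⟩, by rw [hsucc]; exact hlt2, hπj'⟩
  · -- y is the lower endpoint
    have : j = m₀ := π.injective (by rw [heq, hπm₀])
    have hy1 := (hy _ hmem).1
    apply hy1
    show y = π ⟨(j' : ℕ) + 1, hh⟩
    rw [hsucc, heq]

/-- Lifting an arc on `Fin m` to `Fin (m+1)` through the gap at `x₀`. -/
def liftArc (x₀ : Fin (m + 1)) (γ : Arc m) : Arc (m + 1) where
  p := x₀.succAbove γ.p
  q := x₀.succAbove γ.q
  R := γ.R.map (Fin.succAboveEmb x₀)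
  hpq := Fin.succAbove_lt_succAbove_iff.2 γ.hpq
  hR := by
    intro x hx
    simp only [Finset.mem_map, Fin.succAboveEmb_apply] at hx
    obtain ⟨y, hy, rfl⟩ := hx
    exact ⟨Fin.succAbove_lt_succAbove_iff.2 (γ.hR y hy).1,
      Fin.succAbove_lt_succAbove_iff.2 (γ.hR y hy).2⟩

theorem liftArc_p (x₀ : Fin (m+1)) (γ : Arc m) : (liftArc x₀ γ).p = x₀.succAbove γ.p := rfl
theorem liftArc_q (x₀ : Fin (m+1)) (γ : Arc m) : (liftArc x₀ γ).q = x₀.succAbove γ.q := rfl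

theorem mem_liftArc_R {x₀ : Fin (m+1)} {γ : Arc m} {z : Fin m} :
    x₀.succAbove z ∈ (liftArc x₀ γ).R ↔ z ∈ γ.R := by
  simp only [liftArc, Finset.mem_map, Fin.succAboveEmb_apply]
  constructor
  · rintro ⟨y, hy, hyz⟩
    rwa [← Fin.succAbove_right_injective hyz]
  · intro h; exact ⟨z, h, rfl⟩

theorem liftArc_injective (x₀ : Fin (m+1)) : Function.Injective (liftArc x₀) := by
  intro γ₁ γ₂ h
  have hp := congrArg Arc.p h
  have hq := congrArg Arc.q h
  have hR := congrArg Arc.R h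
  simp only [liftArc] at hp hq hR
  exact arcExt (Fin.succAbove_right_injective hp) (Fin.succAbove_right_injective hq)
    (Finset.map_injective _ hR)

theorem sgn_liftArc (x₀ : Fin (m+1)) (γ : Arc m) (z : Fin m) :
    (liftArc x₀ γ).sgn (x₀.succAbove z) = γ.sgn z := by
  unfold Arc.sgn
  have h1 : (x₀.succAbove z = (liftArc x₀ γ).p ∨ x₀.succAbove z = (liftArc x₀ γ).q)
      ↔ (z = γ.p ∨ z = γ.q) := by
    rw [liftArc_p, liftArc_q]
    constructor
    · rintro (h | h) <;> [left; right] <;> exact Fin.succAbove_right_injective h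
    · rintro (h | h) <;> [left; right] <;> rw [h]
  rw [if_congr h1 rfl rfl, if_congr mem_liftArc_R rfl rfl]

theorem compatible_liftArc {x₀ : Fin (m+1)} {γ₁ γ₂ : Arc m}
    (h : Arc.Compatible (liftArc x₀ γ₁) (liftArc x₀ γ₂)) : Arc.Compatible γ₁ γ₂ := by
  obtain ⟨hp, hq, hc⟩ := h
  refine ⟨fun e => hp (by rw [liftArc_p, liftArc_p, e]),
    fun e => hq (by rw [liftArc_q, liftArc_q, e]), fun ⟨u, v, h1, h2, h3, h4⟩ => ?_⟩
  refine hc ⟨x₀.succAbove u, x₀.succAbove v, ?_, ?_, ?_, ?_⟩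
  · rw [liftArc_p, liftArc_p]
    refine max_le ?_ ?_ <;>
      exact (Fin.succAbove_le_succAbove_iff).2 (le_trans (by simp) h1)
  · exact Fin.succAbove_lt_succAbove_iff.2 h2
  · rw [liftArc_q, liftArc_q]
    refine le_min ?_ ?_ <;>
      exact (Fin.succAbove_le_succAbove_iff).2 (le_trans h3 (by simp))
  · rw [sgn_liftArc, sgn_liftArc, sgn_liftArc, sgn_liftArc]; exact h4

/-- Prepend a first value `x₀` to a permutation of the remaining `m` values. -/
def consPerm (x₀ : Fin (m + 1)) (π' : Perm (Fin m)) : Perm (Fin (m + 1)) :=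
  ((finSuccEquiv m).trans π'.optionCongr).trans (finSuccEquiv' x₀).symm

theorem consPerm_zero (x₀ : Fin (m+1)) (π' : Perm (Fin m)) : consPerm x₀ π' 0 = x₀ := by
  simp [consPerm, finSuccEquiv'_symm_none]

theorem consPerm_succ (x₀ : Fin (m+1)) (π' : Perm (Fin m)) (j : Fin m) :
    consPerm x₀ π' j.succ = x₀.succAbove (π' j) := by
  simp [consPerm, finSuccEquiv'_symm_some]

theorem consPerm_eta (π : Perm (Fin (m+1))) : ∃ π' : Perm (Fin m), π = consPerm (π 0) π' := by
  set e : Option (Fin m) ≃ Option (Fin m) :=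
    ((finSuccEquiv m).symm.trans π).trans (finSuccEquiv' (π 0)) with he
  have hnone : e none = none := by
    simp [he, finSuccEquiv_symm_none, finSuccEquiv'_at]
  refine ⟨e.removeNone, Equiv.ext fun x => ?_⟩
  induction x using Fin.cases with
  | zero => rw [consPerm_zero]
  | succ j =>
    rw [consPerm_succ]
    have hne : π j.succ ≠ π 0 := fun h => by
      have := π.injective h
      simp [Fin.ext_iff] at this
    obtain ⟨z, hz⟩ := Fin.exists_succAbove_eq hne
    have hesome : e (some j) = some z := by
      simp only [he, Equiv.trans_apply, finSuccEquiv_symm_some, ← hz, finSuccEquiv'_succAbove]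
    have := Equiv.removeNone_some e ⟨z, hesome⟩
    rw [hesome] at this
    have hz2 : e.removeNone j = z := Option.some_injective _ this
    rw [hz2, hz]

theorem descArc_zero_R (π : Perm (Fin (m+1))) (h : ((0 : Fin (m+1)) : ℕ) + 1 < m + 1)
    (hd : π ⟨((0 : Fin (m+1)) : ℕ) + 1, h⟩ < π 0) :
    (descArc π 0 h hd).R = Finset.Ioo (π ⟨((0 : Fin (m+1)) : ℕ) + 1, h⟩) (π 0) := by
  ext x
  rw [mem_descArc_R, Finset.mem_Ioo]
  constructor
  · rintro ⟨-, h1, h2⟩; exact ⟨h1, h2⟩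
  · rintro ⟨h1, h2⟩
    refine ⟨⟨π.symm x, ?_, π.apply_symm_apply x⟩, h1, h2⟩
    rw [Fin.pos_iff_ne_zero]
    intro hc
    have hx : x = π 0 := by rw [← hc, π.apply_symm_apply]
    rw [hx] at h2
    exact lt_irrefl _ h2
  
theorem descArc_succ (x₀ : Fin (m+1)) (π' : Perm (Fin m)) (j : Fin m)
    (h : ((j.succ : Fin (m+1)) : ℕ) + 1 < m + 1)
    (hd : consPerm x₀ π' ⟨((j.succ : Fin (m+1)) : ℕ) + 1, h⟩ < consPerm x₀ π' j.succ) :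
    ∃ (h' : (j : ℕ) + 1 < m) (hd' : π' ⟨(j : ℕ) + 1, h'⟩ < π' j),
      descArc (consPerm x₀ π') j.succ h hd = liftArc x₀ (descArc π' j h' hd') := by
  have h' : (j : ℕ) + 1 < m := by
    have : (j : ℕ) + 1 + 1 < m + 1 := h
    omega
  set π := consPerm x₀ π' with hπ
  set j₁ : Fin m := ⟨(j : ℕ) + 1, h'⟩ with hj₁
  have hkey : (⟨((j.succ : Fin (m+1)) : ℕ) + 1, h⟩ : Fin (m+1)) = j₁.succ := by
    simp [Fin.ext_iff, hj₁]
  have hp : π ⟨((j.succ : Fin (m+1)) : ℕ) + 1, h⟩ = x₀.succAbove (π' j₁) := by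
    rw [hkey, hπ, consPerm_succ]
  have hq : π j.succ = x₀.succAbove (π' j) := consPerm_succ x₀ π' j
  have hd0 := hd
  rw [hp, hq] at hd0
  have hd' : π' j₁ < π' j := Fin.succAbove_lt_succAbove_iff.1 hd0
  refine ⟨h', hd', ?_⟩
  refine arcExt hp hq ?_
  show ((Finset.Ioi j.succ).image π) ∩ Finset.Ioo (π ⟨_, h⟩) (π j.succ) = _
  ext x
  simp only [liftArc, descArc, Finset.mem_inter, Finset.mem_image, Finset.mem_Ioi,
    Finset.mem_Ioo, Finset.mem_map, Fin.succAboveEmb_apply]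
  rw [hp, hq]
  constructor
  · rintro ⟨⟨t, ht, rfl⟩, hx1, hx2⟩
    have ht0 : t ≠ 0 := Fin.pos_iff_ne_zero.1 (lt_trans (Fin.succ_pos j) ht)
    obtain ⟨s, rfl⟩ := Fin.exists_succ_eq.2 ht0
    have hs : j < s := Fin.succ_lt_succ_iff.1 ht
    have hπs : π s.succ = x₀.succAbove (π' s) := consPerm_succ x₀ π' s
    rw [hπs] at hx1 hx2 ⊢
    exact ⟨π' s, ⟨⟨s, hs, rfl⟩, Fin.succAbove_lt_succAbove_iff.1 hx1,
      Fin.succAbove_lt_succAbove_iff.1 hx2⟩, rfl⟩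
  · rintro ⟨y, ⟨⟨s, hs, rfl⟩, hb1, hb2⟩, rfl⟩
    refine ⟨⟨s.succ, Fin.succ_lt_succ_iff.2 hs, consPerm_succ x₀ π' s⟩,
      Fin.succAbove_lt_succAbove_iff.2 hb1, Fin.succAbove_lt_succAbove_iff.2 hb2⟩

theorem diagram_cons_ne (x₀ : Fin (m+1)) (π' : Perm (Fin m)) :
    {β | β ∈ diagram (consPerm x₀ π') ∧ β.q ≠ x₀} = liftArc x₀ '' diagram π' := by
  ext β
  constructor
  · rintro ⟨hβ, hq⟩
    obtain ⟨i, h, hd, rfl⟩ := mem_diagram_iff.1 hβ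
    have hi0 : i ≠ 0 := by
      rintro rfl
      exact hq (consPerm_zero x₀ π')
    obtain ⟨j, rfl⟩ := Fin.exists_succ_eq.2 hi0
    obtain ⟨h', hd', heq⟩ := descArc_succ x₀ π' j h hd
    exact ⟨_, descArc_mem π' j h' hd', heq.symm⟩
  · rintro ⟨γ, hγ, rfl⟩
    obtain ⟨j, h', hd', rfl⟩ := mem_diagram_iff.1 hγ
    have h : ((j.succ : Fin (m+1)) : ℕ) + 1 < m + 1 := by
      have : (j : ℕ) + 1 < m := h'
      show (j : ℕ) + 1 + 1 < m + 1
      omega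
    set j₁ : Fin m := ⟨(j : ℕ) + 1, h'⟩ with hj₁
    have hkey : (⟨((j.succ : Fin (m+1)) : ℕ) + 1, h⟩ : Fin (m+1)) = j₁.succ := by
      simp [Fin.ext_iff, hj₁]
    have hd : consPerm x₀ π' ⟨((j.succ : Fin (m+1)) : ℕ) + 1, h⟩ < consPerm x₀ π' j.succ := by
      rw [hkey, consPerm_succ, consPerm_succ]
      exact Fin.succAbove_lt_succAbove_iff.2 hd'
    obtain ⟨h'', hd'', heq⟩ := descArc_succ x₀ π' j h hd
    refine ⟨heq ▸ descArc_mem _ j.succ h hd, ?_⟩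
    rw [liftArc_q]
    exact Fin.succAbove_ne x₀ _
  
theorem diagram_cons_q_eq {x₀ : Fin (m+1)} {π' : Perm (Fin m)} {β : Arc (m+1)}
    (hβ : β ∈ diagram (consPerm x₀ π')) (hq : β.q = x₀) :
    ∃ (h : ((0 : Fin (m+1)) : ℕ) + 1 < m + 1)
      (hd : consPerm x₀ π' ⟨((0 : Fin (m+1)) : ℕ) + 1, h⟩ < consPerm x₀ π' 0),
      β = descArc (consPerm x₀ π') 0 h hd := by
  obtain ⟨i, h, hd, rfl⟩ := mem_diagram_iff.1 hβ
  have hi : i = 0 := by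
    refine (consPerm x₀ π').injective ?_
    rw [consPerm_zero]
    exact hq
  subst hi
  exact ⟨h, hd, rfl⟩

theorem exists_liftArc_eq {x₀ : Fin (m+1)} {β : Arc (m+1)} (hp : β.p ≠ x₀) (hq : β.q ≠ x₀)
    (hR : x₀ ∉ β.R) : ∃ γ : Arc m, liftArc x₀ γ = β := by
  obtain ⟨p', hp'⟩ := Fin.exists_succAbove_eq hp
  obtain ⟨q', hq'⟩ := Fin.exists_succAbove_eq hq
  have hinj : Set.InjOn x₀.succAbove (x₀.succAbove ⁻¹' ↑β.R) :=
    Fin.succAbove_right_injective.injOn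
  refine ⟨⟨p', q', β.R.preimage x₀.succAbove hinj, ?_, ?_⟩, ?_⟩
  · rw [← Fin.succAbove_lt_succAbove_iff (p := x₀), hp', hq']; exact β.hpq
  · intro i hi
    rw [Finset.mem_preimage] at hi
    have hb := β.hR _ hi
    constructor
    · rw [← Fin.succAbove_lt_succAbove_iff (p := x₀), hp']; exact hb.1
    · rw [← Fin.succAbove_lt_succAbove_iff (p := x₀), hq']; exact hb.2
  · refine arcExt hp' hq' ?_
    show (β.R.preimage x₀.succAbove hinj).map (Fin.succAboveEmb x₀) = β.R
    ext x
    simp only [Finset.mem_map, Finset.mem_preimage, Fin.succAboveEmb_apply]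
    constructor
    · rintro ⟨y, hy, rfl⟩; exact hy
    · intro hx
      have hxne : x ≠ x₀ := fun e => hR (e ▸ hx)
      obtain ⟨z, hz⟩ := Fin.exists_succAbove_eq hxne
      exact ⟨z, by rw [hz]; exact hx, hz⟩

/-- In an NCAD, the arc whose top is the minimal candidate has full right set. -/
theorem claim1 {D : Set (Arc (m+1))} (hD : IsNCAD D) {x₀ : Fin (m+1)}
    (hc : IsCand D x₀) (hmin : ∀ y, IsCand D y → ¬ y < x₀)
    {α : Arc (m+1)} (hα : α ∈ D) (hαq : α.q = x₀) :
    α.R = Finset.Ioo α.p x₀ := by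
  subst hαq
  by_contra hne
  have hsub : α.R ⊆ Finset.Ioo α.p α.q := fun x hx => Finset.mem_Ioo.2 (α.hR x hx)
  have hbad : (Finset.Ioo α.p α.q \ α.R).Nonempty := by
    rw [Finset.sdiff_nonempty]
    intro hsub2
    exact hne (Finset.Subset.antisymm hsub hsub2)
  set y := (Finset.Ioo α.p α.q \ α.R).max' hbad with hy
  have hymem := (Finset.Ioo α.p α.q \ α.R).max'_mem hbad
  rw [Finset.mem_sdiff, Finset.mem_Ioo] at hymem
  obtain ⟨⟨hy1, hy2⟩, hyR⟩ := hymem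
  rw [← hy] at hy1 hy2 hyR
  have hmax : ∀ z, α.p < z → z < α.q → z ∉ α.R → z ≤ y := fun z h1 h2 h3 =>
    Finset.le_max' _ z (by rw [Finset.mem_sdiff, Finset.mem_Ioo]; exact ⟨⟨h1, h2⟩, h3⟩)
  have hyc : ¬ IsCand D y := fun h => hmin y h hy2
  rw [IsCand] at hyc; push_neg at hyc
  obtain ⟨β, hβ, hor⟩ := hyc
  have hsgnαy : α.sgn y = -1 := sgn_neg hy1.ne' hy2.ne hyR
  by_cases hyp : y = β.p
  · -- y is a lower endpoint of β
    have hβα : β ≠ α := by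
      rintro rfl
      rw [hyp] at hy1
      exact lt_irrefl _ hy1
    obtain ⟨hpne, hqne, hcross⟩ := hD α hα β hβ (Ne.symm hβα)
    have hsgnβy : β.sgn y = 0 := by rw [hyp]; exact sgn_p β
    have hyq : y < β.q := by rw [hyp]; exact β.hpq
    rcases lt_or_gt_of_ne hqne with hqlt | hqgt
    · -- α.q < β.q ; use z = α.q
      refine hcross ⟨y, α.q, max_le hy1.le (le_of_eq hyp.symm), hy2, le_min le_rfl hqlt.le, ?_⟩
      have h1 : α.p < α.q := α.hpq
      have hβp : β.p < α.q := hyp ▸ hy2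
      have hsgnβz : β.sgn α.q = -1 :=
        sgn_neg hβp.ne' hqlt.ne (hc β hβ).2
      rw [hsgnαy, hsgnβy, sgn_q, hsgnβz]
      norm_num
    · -- β.q < α.q ; use z = β.q
      have hz1 : α.p < β.q := hy1.trans (hyq)
      have hzR : β.q ∈ α.R := by
        by_contra hzc
        exact absurd (hmax _ hz1 hqgt hzc) (not_le.2 (hyq))
      refine hcross ⟨y, β.q, max_le hy1.le (le_of_eq hyp.symm), hyq,
        le_min hqgt.le le_rfl, ?_⟩
      rw [hsgnαy, hsgnβy, sgn_one hz1.ne' hqgt.ne hzR, sgn_q]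
      norm_num
  · -- y ∈ β.R
    have hyR' : y ∈ β.R := hor hyp
    have hβα : β ≠ α := by rintro rfl; exact hyR hyR'
    obtain ⟨hb1, hb2⟩ := β.hR y hyR'
    obtain ⟨hpne, hqne, hcross⟩ := hD α hα β hβ (Ne.symm hβα)
    have hsgnβy : β.sgn y = 1 := sgn_one hb1.ne' hb2.ne hyR'
    rcases lt_or_gt_of_ne hqne with hqlt | hqgt
    · -- α.q < β.q ; z = α.q
      refine hcross ⟨y, α.q, max_le hy1.le hb1.le, hy2, le_min le_rfl hqlt.le, ?_⟩
      have hβp : β.p < α.q := hb1.trans hy2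
      have hsgnβz : β.sgn α.q = -1 := sgn_neg hβp.ne' hqlt.ne (hc β hβ).2
      rw [hsgnαy, hsgnβy, sgn_q, hsgnβz]
      norm_num
    · -- β.q < α.q ; z = β.q
      have hz1 : α.p < β.q := hy1.trans hb2
      have hzR : β.q ∈ α.R := by
        by_contra hzc
        exact absurd (hmax _ hz1 hqgt hzc) (not_le.2 hb2)
      refine hcross ⟨y, β.q, max_le hy1.le hb1.le, hb2, le_min hqgt.le le_rfl, ?_⟩
      rw [hsgnαy, hsgnβy, sgn_one hz1.ne' hqgt.ne hzR, sgn_q]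
      norm_num

/-- In an NCAD, no other arc passes right of the lower endpoint of the minimal-candidate arc. -/
theorem claim2 {D : Set (Arc (m+1))} (hD : IsNCAD D) {x₀ : Fin (m+1)}
    (hc : IsCand D x₀) (hmin : ∀ y, IsCand D y → ¬ y < x₀)
    {α : Arc (m+1)} (hα : α ∈ D) (hαq : α.q = x₀)
    {β : Arc (m+1)} (hβ : β ∈ D) (hβα : β ≠ α) : α.p ∉ β.R := by
  have hR1 := claim1 hD hc hmin hα hαq
  subst hαq
  intro hmem
  obtain ⟨hb1, hb2⟩ := β.hR _ hmem
  obtain ⟨hpne, hqne, hcross⟩ := hD α hα β hβ (Ne.symm hβα)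
  have hsgnβ : β.sgn α.p = 1 := sgn_one hb1.ne' hb2.ne hmem
  rcases lt_or_gt_of_ne hqne with hqlt | hqgt
  · -- α.q < β.q : z = α.q
    refine hcross ⟨α.p, α.q, max_le le_rfl hb1.le, α.hpq, le_min le_rfl hqlt.le, ?_⟩
    have hβp : β.p < α.q := hb1.trans α.hpq
    have hsgnβz : β.sgn α.q = -1 := sgn_neg hβp.ne' hqlt.ne (hc β hβ).2
    rw [sgn_p, hsgnβ, sgn_q, hsgnβz]
    norm_num
  · -- β.q < α.q : z = β.q
    have hz1 : α.p < β.q := hb2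
    have hzR : β.q ∈ α.R := by
      rw [hR1, Finset.mem_Ioo]
      exact ⟨hz1, hqgt⟩
    refine hcross ⟨α.p, β.q, max_le le_rfl hb1.le, hb2, le_min hqgt.le le_rfl, ?_⟩
    rw [sgn_p, hsgnβ, sgn_one hz1.ne' hqgt.ne hzR, sgn_q]
    norm_num

theorem key : ∀ n : ℕ,
    (∀ π σ : Perm (Fin n), diagram π = diagram σ → π = σ) ∧
    (∀ D : Set (Arc n), IsNCAD D → ∃ π : Perm (Fin n), diagram π = D) := by
  intro n
  induction n with
  | zero =>
    constructor
    · intro π σ _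
      exact Equiv.ext fun x => x.elim0
    · intro D _
      exact ⟨1, by ext α; exact α.p.elim0⟩
  | succ m ih =>
    constructor
    · -- injectivity
      intro π σ hd
      have hx : π 0 = σ 0 := by
        refine le_antisymm (first_le_cand π ?_) (first_le_cand σ ?_)
        · rw [hd]; exact isCand_first σ
        · rw [← hd]; exact isCand_first π
      obtain ⟨π', hπ⟩ := consPerm_eta π
      obtain ⟨σ', hσ⟩ := consPerm_eta σ
      have himg : liftArc (π 0) '' diagram π' = liftArc (π 0) '' diagram σ' := by
        rw [← diagram_cons_ne, ← hπ]
        conv_rhs => rw [hx, ← diagram_cons_ne, ← hσ]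
        rw [hd, hx]
      have hd' : diagram π' = diagram σ' :=
        Set.image_injective.2 (liftArc_injective _) himg
      rw [hπ, hσ, ih.1 π' σ' hd', hx]
    · -- surjectivity
      intro D hD
      have hlast : IsCand D (Fin.last m) := by
        intro α hα
        constructor
        · exact (lt_of_lt_of_le α.hpq (Fin.le_last _)).ne'
        · intro h
          exact absurd (Fin.le_last α.q) (not_le.2 ((α.hR _ h).2))
      obtain ⟨x₀, hc, hmin'⟩ := wellFounded_lt.has_min {x | IsCand D x} ⟨Fin.last m, hlast⟩
      have hmin : ∀ y, IsCand D y → ¬ y < x₀ := fun y hy => hmin' y hy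
      by_cases hex : ∃ α ∈ D, α.q = x₀
      · -- Case A : there is an arc with top x₀
        obtain ⟨α, hα, hαq⟩ := hex
        have hm : 0 < m := by
          have h1 := α.hpq
          rw [Fin.lt_def] at h1
          have h2 := α.q.2
          omega
        obtain ⟨m', rfl⟩ := Nat.exists_eq_succ_of_ne_zero hm.ne'
        have hR1 := claim1 hD hc hmin hα hαq
        set D' : Set (Arc (m'+1)) := {γ | liftArc x₀ γ ∈ D ∧ liftArc x₀ γ ≠ α} with hDdef
        have hD'ncad : IsNCAD D' := fun γ₁ h1 γ₂ h2 hne =>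
          compatible_liftArc (hD _ h1.1 _ h2.1 (fun e => hne (liftArc_injective _ e)))
        obtain ⟨π', hπ'⟩ := ih.2 D' hD'ncad
        have hrep : ∀ β ∈ D, β ≠ α → ∃ γ, γ ∈ D' ∧ liftArc x₀ γ = β := by
          intro β hβ hne
          have hq : β.q ≠ x₀ := fun e => (hD α hα β hβ (Ne.symm hne)).2.1 (hαq.trans e.symm)
          have hp : β.p ≠ x₀ := fun e => (hc β hβ).1 e.symm
          obtain ⟨γ, hγ⟩ := exists_liftArc_eq hp hq (hc β hβ).2
          exact ⟨γ, ⟨hγ.symm ▸ hβ, hγ.symm ▸ hne⟩, hγ⟩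
        have hplt : α.p < x₀ := hαq ▸ α.hpq
        obtain ⟨p', hp'⟩ := Fin.exists_succAbove_eq hplt.ne
        -- the first entry of π' is p'
        have hcand : IsCand D' p' := by
          intro γ hγ
          obtain ⟨hγD, hγne⟩ := hγ
          constructor
          · intro e
            exact (hD α hα _ hγD (Ne.symm hγne)).1 (by rw [liftArc_p, ← e, hp'])
          · intro hmem
            exact claim2 hD hc hmin hα hαq hγD hγne
              (by rw [← hp']; exact mem_liftArc_R.2 hmem)
        have hle : π' 0 ≤ p' := first_le_cand π' (by rw [hπ']; exact hcand)
        have hz₀cand : IsCand D' (π' 0) := by rw [← hπ']; exact isCand_first π'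
        have hnlt : ¬ π' 0 < p' := by
          intro hlt
          have hycand : IsCand D (x₀.succAbove (π' 0)) := by
            intro β hβ
            by_cases hβα : β = α
            · subst hβα
              constructor
              · intro e
                exact hlt.ne (Fin.succAbove_right_injective (e.trans hp'.symm))
              · intro hmem
                have h1 := (β.hR _ hmem).1
                have h2 : x₀.succAbove (π' 0) < β.p := by
                  rw [← hp']
                  exact Fin.succAbove_lt_succAbove_iff.2 hlt
                exact absurd (h1.trans h2) (lt_irrefl _)
            · obtain ⟨γ, hγ', hγeq⟩ := hrep β hβ hβα
              subst hγeq
              constructor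
              · intro e
                exact (hz₀cand γ hγ').1 (Fin.succAbove_right_injective (e.trans (liftArc_p _ _)))
              · intro hmem
                exact (hz₀cand γ hγ').2 (mem_liftArc_R.1 hmem)
          refine hmin _ hycand ?_
          calc x₀.succAbove (π' 0) < x₀.succAbove p' := Fin.succAbove_lt_succAbove_iff.2 hlt
            _ = α.p := hp'
            _ < x₀ := hplt
        have hfirst : π' 0 = p' := hle.lt_or_eq.resolve_left hnlt
        -- assemble
        have h0 : ((0 : Fin (m'+2)) : ℕ) + 1 < m' + 2 := by simp
        have hsucc0 : (⟨((0 : Fin (m'+2)) : ℕ) + 1, h0⟩ : Fin (m'+2)) = (0 : Fin (m'+1)).succ := by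
          simp [Fin.ext_iff]
        have hπ1 : consPerm x₀ π' ⟨((0 : Fin (m'+2)) : ℕ) + 1, h0⟩ = α.p := by
          rw [hsucc0, consPerm_succ, hfirst, hp']
        have hd0 : consPerm x₀ π' ⟨((0 : Fin (m'+2)) : ℕ) + 1, h0⟩ < consPerm x₀ π' 0 := by
          rw [hπ1, consPerm_zero]; exact hplt
        have harc0 : descArc (consPerm x₀ π') 0 h0 hd0 = α := by
          refine arcExt hπ1 (show consPerm x₀ π' 0 = α.q by rw [consPerm_zero]; exact hαq.symm) ?_
          rw [descArc_zero_R, hπ1, consPerm_zero]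
          exact hR1.symm
        refine ⟨consPerm x₀ π', ?_⟩
        ext β
        constructor
        · intro hβ
          by_cases hq : β.q = x₀
          · obtain ⟨h, hdd, rfl⟩ := diagram_cons_q_eq hβ hq
            have : descArc (consPerm x₀ π') 0 h hdd = α := harc0
            rw [this]; exact hα
          · have hβ2 : β ∈ liftArc x₀ '' diagram π' := by
              rw [← diagram_cons_ne]; exact ⟨hβ, hq⟩
            obtain ⟨γ, hγ, rfl⟩ := hβ2
            rw [hπ'] at hγ
            exact hγ.1
        · intro hβ
          by_cases hβα : β = α
          · subst hβα
            exact harc0 ▸ descArc_mem (consPerm x₀ π') 0 h0 hd0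
          · obtain ⟨γ, hγ', hγeq⟩ := hrep β hβ hβα
            rw [← hγeq]
            have hγd : γ ∈ diagram π' := by rw [hπ']; exact hγ'
            exact ((Set.ext_iff.1 (diagram_cons_ne x₀ π') _).2 ⟨γ, hγd, rfl⟩).1
      · -- Case B : no arc with top x₀
        push_neg at hex
        set D' : Set (Arc m) := {γ | liftArc x₀ γ ∈ D} with hDdef
        have hD'ncad : IsNCAD D' := fun γ₁ h1 γ₂ h2 hne =>
          compatible_liftArc (hD _ h1 _ h2 (fun e => hne (liftArc_injective _ e)))
        obtain ⟨π', hπ'⟩ := ih.2 D' hD'ncad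
        have hrep : ∀ β ∈ D, ∃ γ, γ ∈ D' ∧ liftArc x₀ γ = β := by
          intro β hβ
          obtain ⟨γ, hγ⟩ := exists_liftArc_eq (fun e => (hc β hβ).1 e.symm) (hex β hβ) (hc β hβ).2
          refine ⟨γ, ?_, hγ⟩
          show liftArc x₀ γ ∈ D
          rw [hγ]; exact hβ
        refine ⟨consPerm x₀ π', ?_⟩
        ext β
        constructor
        · intro hβ
          by_cases hq : β.q = x₀
          · exfalso
            obtain ⟨h, hdd, rfl⟩ := diagram_cons_q_eq hβ hq
            have hm : 0 < m := by
              have := h; simp at this; omega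
            obtain ⟨m', rfl⟩ := Nat.exists_eq_succ_of_ne_zero hm.ne'
            have hsucc0 : (⟨((0 : Fin (m'+2)) : ℕ) + 1, h⟩ : Fin (m'+2))
                = (0 : Fin (m'+1)).succ := by simp [Fin.ext_iff]
            rw [hsucc0, consPerm_succ, consPerm_zero] at hdd
            have hz₀cand : IsCand D' (π' 0) := by rw [← hπ']; exact isCand_first π'
            have hycand : IsCand D (x₀.succAbove (π' 0)) := by
              intro γ' hγ'
              obtain ⟨γ, hγm, rfl⟩ := hrep γ' hγ'
              constructor
              · intro e
                exact (hz₀cand γ hγm).1 (Fin.succAbove_right_injective (e.trans (liftArc_p _ _)))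
              · intro hmem
                exact (hz₀cand γ hγm).2 (mem_liftArc_R.1 hmem)
            exact hmin _ hycand hdd
          · have hβ2 : β ∈ liftArc x₀ '' diagram π' := by
              rw [← diagram_cons_ne]; exact ⟨hβ, hq⟩
            obtain ⟨γ, hγ, rfl⟩ := hβ2
            rw [hπ'] at hγ
            exact hγ
        · intro hβ
          obtain ⟨γ, hγ', hγeq⟩ := hrep β hβ
          rw [← hγeq]
          have hγd : γ ∈ diagram π' := by rw [hπ']; exact hγ'
          exact ((Set.ext_iff.1 (diagram_cons_ne x₀ π') _).2 ⟨γ, hγd, rfl⟩).1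

end NCAD

/-- The map `δ` is a bijection from the symmetric group `S_n` to the set of
noncrossing arc diagrams on `n` points. -/
theorem stmt8 (n : ℕ) :
    (∀ π : Equiv.Perm (Fin n), IsNCAD (diagram π)) ∧
    (∀ π σ : Equiv.Perm (Fin n), diagram π = diagram σ → π = σ) ∧
    (∀ D : Set (Arc n), IsNCAD D → ∃ π : Equiv.Perm (Fin n), diagram π = D) := by
  exact ⟨fun π => NCAD.isNCAD_diagram π, (NCAD.key n).1, (NCAD.key n).2⟩
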